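/- In the 4×4 game C obtained as the C-class extension of the Prisoner's Dilemma with t = 3/4 (θ₁ = π/3), the pure strategy profiles (iX, U₁) and (U₁, iX) are Nash equilibria with payoff 19/8 for both players, whereas the classical equilibrium profile (iX, iX) is no longer a Nash equilibrium. -/
import Mathlib


/-- Pure-strategy Nash equilibrium of a bimatrix game. -/
def IsNash {n : Type*} [Fintype n] (A B : Matrix n n ℚ) (s : n × n) : Prop :=
  (∀ k, A k s.2 ≤ A s.1 s.2) ∧ (∀ l, B s.1 l ≤ B s.1 s.2)

theorem stmt_17 :
    let A : Matrix (Fin 4) (Fin 4) ℚ :=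
      !![3, 0, 17/8, 19/8;
         5, 1, 19/8, 17/8;
         17/8, 19/8, 27/16, 57/16;
         19/8, 17/8, 17/16, 43/16]
    let B : Matrix (Fin 4) (Fin 4) ℚ :=
      !![3, 5, 17/8, 19/8;
         0, 1, 19/8, 17/8;
         17/8, 19/8, 27/16, 17/16;
         19/8, 17/8, 57/16, 43/16]
    IsNash A B (1, 2) ∧ IsNash A B (2, 1) ∧
    A 1 2 = 19/8 ∧ B 1 2 = 19/8 ∧ A 2 1 = 19/8 ∧ B 2 1 = 19/8 ∧
    ¬ IsNash A B (1, 1) := by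
  intro A B
  refine ⟨⟨fun k => ?_, fun l => ?_⟩, ⟨fun k => ?_, fun l => ?_⟩, ?_, ?_, ?_, ?_, fun h => ?_⟩
  · fin_cases k <;> simp [A] <;> norm_num
  · fin_cases l <;> simp [A, B] <;> norm_num
  · fin_cases k <;> simp [A] <;> norm_num
  · fin_cases l <;> simp [A, B] <;> norm_num
  · simp [A]
  · simp [B]
  · simp [A]
  · simp [B]
  · have := h.1 2
    simp [A] at this
    norm_num at this
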